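/- For every γ > 0, the function F(λ) := λ² · ∫ 1/(s + λ)² dMP(γ)(s) is strictly increasing and continuous on (0, ∞), with F(λ) → max(0, 1 − 1/γ) as λ → 0⁺ and F(λ) → 1 as λ → ∞. Consequently, for every τ ∈ (max(0, 1 − 1/γ), 1) there exists a unique λ > 0 with F(λ) = τ. -/

import Mathlib

open MeasureTheory Filter
open Set


/-- The Marchenko–Pastur measure with aspect ratio `γ`: a point mass of weight
`max 0 (1 - 1/γ)` at `0` plus the absolutely continuous part with density
`s ↦ √((b - s)(s - a)) / (2πγs)` on `[a, b]`, where `a = (1 - √γ)²`, `b = (1 + √γ)²`. -/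
noncomputable def MP (γ : ℝ) : Measure ℝ :=
  ENNReal.ofReal (max 0 (1 - 1 / γ)) • Measure.dirac 0 +
    volume.withDensity
      (Set.indicator (Set.Icc ((1 - Real.sqrt γ) ^ 2) ((1 + Real.sqrt γ) ^ 2))
        (fun s => ENNReal.ofReal
          (Real.sqrt (((1 + Real.sqrt γ) ^ 2 - s) * (s - (1 - Real.sqrt γ) ^ 2)) /
            (2 * Real.pi * γ * s))))

section aux
variable {γ : ℝ}

lemma core_integrable (m r : ℝ) (hr : 0 < r) (hm : r ≤ m) :
    IntervalIntegrable (fun s => Real.sqrt ((m + r - s) * (s - (m - r))) / s)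
      volume (m - r) (m + r) := by
  set A := m - r with hA
  set B := m + r with hB
  have hAB : A ≤ B := by simp only [hA, hB]; linarith
  have hA0 : 0 ≤ A := by simp only [hA]; linarith
  have hB0 : 0 < B := by simp only [hB]; linarith
  rcases eq_or_lt_of_le hA0 with hA0' | hA0'
  · have hbound : IntervalIntegrable (fun s : ℝ => Real.sqrt B * s ^ (-(1/2) : ℝ)) volume A B :=
      (intervalIntegral.intervalIntegrable_rpow' (by norm_num)).const_mul _
    apply hbound.mono_fun
    · apply Measurable.aestronglyMeasurable
      exact (Real.continuous_sqrt.comp ((continuous_const.sub continuous_id).mul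
        (continuous_id.sub continuous_const))).measurable.div measurable_id
    · rw [uIoc_of_le hAB]
      filter_upwards [ae_restrict_mem measurableSet_Ioc] with s hs
      have hs0 : 0 < s := lt_of_le_of_lt hA0'.le hs.1
      have h1 : Real.sqrt ((B - s) * (s - A)) / s ≤ Real.sqrt B * s ^ (-(1/2) : ℝ) := by
        have hle : (B - s) * (s - A) ≤ B * s := by
          rw [← hA0']; simp only [sub_zero]
          apply mul_le_mul_of_nonneg_right _ hs0.le
          linarith
        have hmono : Real.sqrt ((B - s) * (s - A)) ≤ Real.sqrt (B * s) := Real.sqrt_le_sqrt hle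
        have hBs : Real.sqrt (B * s) = Real.sqrt B * Real.sqrt s := Real.sqrt_mul hB0.le s
        have hrs : s ^ (-(1/2) : ℝ) = 1 / Real.sqrt s := by
          rw [Real.rpow_neg hs0.le, Real.sqrt_eq_rpow]; norm_num
        rw [hrs, div_le_iff₀ hs0]
        have hss : Real.sqrt B * (1 / Real.sqrt s) * s = Real.sqrt B * Real.sqrt s := by
          rw [one_div, mul_assoc]
          congr 1
          rw [inv_mul_eq_div, Real.div_sqrt]
        rw [hss, ← hBs]
        exact hmono
      have h2 : 0 ≤ Real.sqrt ((B - s) * (s - A)) / s := by positivity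
      rw [Real.norm_eq_abs, Real.norm_eq_abs, abs_of_nonneg h2, abs_of_nonneg (by positivity)]
      exact h1
  · apply ContinuousOn.intervalIntegrable
    rw [uIcc_of_le hAB]
    apply ContinuousOn.div
    · exact (Real.continuous_sqrt.comp ((continuous_const.sub continuous_id).mul
        (continuous_id.sub continuous_const))).continuousOn
    · exact continuousOn_id
    · intro s hs; exact (lt_of_lt_of_le hA0' hs.1).ne'

lemma core_integral (m r : ℝ) (hr : 0 < r) (hm : r ≤ m) :
    ∫ s in (m - r)..(m + r), Real.sqrt ((m + r - s) * (s - (m - r))) / s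
      = Real.pi * (m - Real.sqrt (m ^ 2 - r ^ 2)) := by
  set A := m - r with hA
  set B := m + r with hB
  set c := Real.sqrt (m ^ 2 - r ^ 2) with hc
  have hAB : A ≤ B := by simp only [hA, hB]; linarith
  have hA0 : 0 ≤ A := by simp only [hA]; linarith
  have hB0 : 0 < B := by simp only [hB]; linarith
  have hmr2 : (0:ℝ) ≤ m ^ 2 - r ^ 2 := by nlinarith
  have hc0 : 0 ≤ c := Real.sqrt_nonneg _
  have hc2 : c ^ 2 = m ^ 2 - r ^ 2 := Real.sq_sqrt hmr2
  set Φ : ℝ → ℝ := fun s =>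
    Real.sqrt ((B - s) * (s - A)) + m * Real.arcsin ((s - m) / r)
      - c * Real.arcsin ((m * s - (m ^ 2 - r ^ 2)) / (r * s)) with hΦ
  -- continuity of Φ on Icc A B
  have hcont : ContinuousOn Φ (Icc A B) := by
    apply ContinuousOn.sub
    · apply ContinuousOn.add
      · exact (Real.continuous_sqrt.comp
          (((continuous_const.sub continuous_id).mul
            (continuous_id.sub continuous_const)))).continuousOn
      · exact (continuous_const.mul (Real.continuous_arcsin.comp
          ((continuous_id.sub continuous_const).div_const r))).continuousOn
    · rcases eq_or_lt_of_le hA0 with hA0' | hA0'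
      · have hc' : c = 0 := by
          rw [hc]
          have : m = r := by simp only [hA] at hA0'; linarith
          simp [this]
        simp only [hc', zero_mul]
        exact continuousOn_const
      · apply ContinuousOn.mul continuousOn_const
        apply Real.continuous_arcsin.comp_continuousOn
        apply ContinuousOn.div
        · exact ((continuous_const.mul continuous_id).sub continuous_const).continuousOn
        · exact (continuous_const.mul continuous_id).continuousOn
        · intro s hs
          have : 0 < s := lt_of_lt_of_le hA0' hs.1
          positivity
  -- derivative of Φ on the interior
  have hderiv : ∀ s ∈ Ioo A B, HasDerivAt Φ (Real.sqrt ((B - s) * (s - A)) / s) s := by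
    intro s hs
    have hs0 : 0 < s := lt_of_le_of_lt hA0 hs.1
    have hQpos : 0 < (B - s) * (s - A) := mul_pos (by linarith [hs.2]) (by linarith [hs.1])
    set S := Real.sqrt ((B - s) * (s - A)) with hS
    have hSpos : 0 < S := Real.sqrt_pos.2 hQpos
    have hS2 : S ^ 2 = (B - s) * (s - A) := Real.sq_sqrt hQpos.le
    have hS2' : S ^ 2 = (m + r - s) * (s - (m - r)) := by rw [hS2]
    -- term 1
    have hQ : HasDerivAt (fun s => (B - s) * (s - A)) (A + B - 2 * s) s := by
      have := ((hasDerivAt_id s).const_sub B).mul ((hasDerivAt_id s).sub_const A)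
      simp only [id_eq] at this
      exact this.congr_deriv (by ring)
    have h1 : HasDerivAt (fun s => Real.sqrt ((B - s) * (s - A))) ((m - s) / S) s := by
      have := (Real.hasDerivAt_sqrt hQpos.ne').comp s hQ
      refine this.congr_deriv ?_; symm
      rw [← hS]
      field_simp
      simp only [hA, hB]; ring
    -- term 2
    have hx1m : -1 < (s - m) / r := by
      rw [lt_div_iff₀ hr]; simp only [hA] at hs; linarith [hs.1]
    have hx1M : (s - m) / r < 1 := by
      rw [div_lt_one hr]; simp only [hB] at hs; linarith [hs.2]
    have hsq1 : Real.sqrt (1 - ((s - m) / r) ^ 2) = S / r := by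
      have h : 1 - ((s - m) / r) ^ 2 = ((B - s) * (s - A)) / r ^ 2 := by
        field_simp
        simp only [hA, hB]; ring
      rw [h, Real.sqrt_div hQpos.le, Real.sqrt_sq hr.le, hS]
    have h2 : HasDerivAt (fun s => m * Real.arcsin ((s - m) / r)) (m / S) s := by
      have hin : HasDerivAt (fun s : ℝ => (s - m) / r) (1 / r) s := by
        have := ((hasDerivAt_id s).sub_const m).div_const r
        simpa using this
      have := ((Real.hasDerivAt_arcsin hx1m.ne' hx1M.ne).comp s hin).const_mul m
      refine this.congr_deriv ?_; symm
      rw [hsq1]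
      field_simp
    -- term 3
    have h3 : HasDerivAt (fun s => c * Real.arcsin ((m * s - (m ^ 2 - r ^ 2)) / (r * s)))
        ((m ^ 2 - r ^ 2) / (s * S)) s := by
      rcases eq_or_lt_of_le hmr2 with hz | hz
      · have hczero : c = 0 := by rw [hc, ← hz, Real.sqrt_zero]
        have hfun : (fun s => c * Real.arcsin ((m * s - (m ^ 2 - r ^ 2)) / (r * s)))
            = fun _ => (0:ℝ) := by
          funext t; rw [hczero, zero_mul]
        rw [hfun, ← hz]
        simpa using (hasDerivAt_const s (0:ℝ))
      · have hcpos : 0 < c := Real.sqrt_pos.2 hz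
        have hsq2 : 1 - ((m * s - (m ^ 2 - r ^ 2)) / (r * s)) ^ 2
            = ((m ^ 2 - r ^ 2) * ((B - s) * (s - A))) / (r * s) ^ 2 := by
          field_simp
          simp only [hA, hB]; ring
        have hpos2 : 0 < 1 - ((m * s - (m ^ 2 - r ^ 2)) / (r * s)) ^ 2 := by
          rw [hsq2]; positivity
        have hx2m : -1 < (m * s - (m ^ 2 - r ^ 2)) / (r * s) := by nlinarith [hpos2]
        have hx2M : (m * s - (m ^ 2 - r ^ 2)) / (r * s) < 1 := by nlinarith [hpos2]
        have hsqrt2 : Real.sqrt (1 - ((m * s - (m ^ 2 - r ^ 2)) / (r * s)) ^ 2)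
            = c * S / (r * s) := by
          rw [hsq2, Real.sqrt_div (by positivity), Real.sqrt_mul hmr2, Real.sqrt_sq (by positivity),
            hS, hc]
        have hin : HasDerivAt (fun s : ℝ => (m * s - (m ^ 2 - r ^ 2)) / (r * s))
            ((m * (r * s) - (m * s - (m ^ 2 - r ^ 2)) * r) / (r * s) ^ 2) s := by
          have := (((hasDerivAt_id s).const_mul m).sub_const (m ^ 2 - r ^ 2)).div
            ((hasDerivAt_id s).const_mul r) (by positivity)
          simp only [id_eq, mul_one] at this
          exact this
        have := ((Real.hasDerivAt_arcsin hx2m.ne' hx2M.ne).comp s hin).const_mul c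
        refine this.congr_deriv ?_; symm
        rw [hsqrt2]
        field_simp
        ring
    have htot := (h1.add h2).sub h3
    have heq : (m - s) / S + m / S - (m ^ 2 - r ^ 2) / (s * S) = S / s := by
      rw [← add_div, div_sub_div _ _ hSpos.ne' (mul_ne_zero hs0.ne' hSpos.ne'),
        div_eq_div_iff (by positivity) hs0.ne']
      linear_combination (-(s*S)) * hS2'
    rw [← heq]
    exact htot
  -- interval integrability
  have hint : IntervalIntegrable (fun s => Real.sqrt ((B - s) * (s - A)) / s) volume A B := by
    rcases eq_or_lt_of_le hA0 with hA0' | hA0'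
    · have hbound : IntervalIntegrable (fun s : ℝ => Real.sqrt B * s ^ (-(1/2) : ℝ)) volume A B :=
        (intervalIntegral.intervalIntegrable_rpow' (by norm_num)).const_mul _
      apply hbound.mono_fun
      · apply Measurable.aestronglyMeasurable
        exact (Real.continuous_sqrt.comp ((continuous_const.sub continuous_id).mul
          (continuous_id.sub continuous_const))).measurable.div measurable_id
      · rw [uIoc_of_le hAB]
        filter_upwards [ae_restrict_mem measurableSet_Ioc] with s hs
        have hs0 : 0 < s := lt_of_le_of_lt hA0'.le hs.1
        have h1 : Real.sqrt ((B - s) * (s - A)) / s ≤ Real.sqrt B * s ^ (-(1/2) : ℝ) := by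
          have hle : (B - s) * (s - A) ≤ B * s := by
            rw [← hA0']; simp only [sub_zero]
            apply mul_le_mul_of_nonneg_right _ hs0.le
            linarith
          have hmono : Real.sqrt ((B - s) * (s - A)) ≤ Real.sqrt (B * s) := Real.sqrt_le_sqrt hle
          have hBs : Real.sqrt (B * s) = Real.sqrt B * Real.sqrt s := Real.sqrt_mul hB0.le s
          have hrs : s ^ (-(1/2) : ℝ) = 1 / Real.sqrt s := by
            rw [Real.rpow_neg hs0.le, Real.sqrt_eq_rpow]; norm_num
          rw [hrs, div_le_iff₀ hs0]
          have hss : Real.sqrt B * (1 / Real.sqrt s) * s = Real.sqrt B * Real.sqrt s := by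
            rw [one_div, mul_assoc]
            congr 1
            rw [inv_mul_eq_div, Real.div_sqrt]
          rw [hss, ← hBs]
          exact hmono
        have h2 : 0 ≤ Real.sqrt ((B - s) * (s - A)) / s := by positivity
        rw [Real.norm_eq_abs, Real.norm_eq_abs, abs_of_nonneg h2, abs_of_nonneg (by positivity)]
        exact h1
    · apply ContinuousOn.intervalIntegrable
      rw [uIcc_of_le hAB]
      apply ContinuousOn.div
      · exact (Real.continuous_sqrt.comp ((continuous_const.sub continuous_id).mul
          (continuous_id.sub continuous_const))).continuousOn
      · exact continuousOn_id
      · intro s hs; exact (lt_of_lt_of_le hA0' hs.1).ne'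
  rw [intervalIntegral.integral_eq_sub_of_hasDeriv_right_of_le hAB hcont
    (fun s hs => (hderiv s hs).hasDerivWithinAt) hint]
  have e1 : Φ B = m * (Real.pi / 2) - c * (Real.pi / 2) := by
    simp only [hΦ]
    have h1 : (B - B) * (B - A) = 0 := by ring
    have h2 : (B - m) / r = 1 := by rw [hB]; field_simp; ring
    have h3 : (m * B - (m ^ 2 - r ^ 2)) / (r * B) = 1 := by
      rw [hB, div_eq_one_iff_eq (by positivity)]; ring
    rw [h1, h2, h3, Real.sqrt_zero, Real.arcsin_one]
    ring
  have e2 : Φ A = -(m * (Real.pi / 2)) + c * (Real.pi / 2) := by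
    simp only [hΦ]
    have h1 : (B - A) * (A - A) = 0 := by ring
    have h2 : (A - m) / r = -1 := by rw [hA]; field_simp; ring
    rw [h1, h2, Real.sqrt_zero, Real.arcsin_neg_one]
    rcases eq_or_lt_of_le hA0 with hA0' | hA0'
    · have hczero : c = 0 := by
        rw [hc]
        have : m = r := by simp only [hA] at hA0'; linarith
        simp [this]
      rw [hczero]
      ring
    · have h3 : (m * A - (m ^ 2 - r ^ 2)) / (r * A) = -1 := by
        rw [hA, div_eq_iff (by positivity)]; ring
      rw [h3, Real.arcsin_neg_one]
      ring
  rw [e1, e2]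
  ring

lemma mp_integral (hγ : 0 < γ) :
    ∫ s in ((1 - Real.sqrt γ) ^ 2)..((1 + Real.sqrt γ) ^ 2),
      Real.sqrt (((1 + Real.sqrt γ) ^ 2 - s) * (s - (1 - Real.sqrt γ) ^ 2)) / s
      = Real.pi * (1 + γ - |1 - γ|) := by
  have hg : Real.sqrt γ ^ 2 = γ := Real.sq_sqrt hγ.le
  have hgpos : 0 < Real.sqrt γ := Real.sqrt_pos.2 hγ
  have hA : ((1 - Real.sqrt γ) ^ 2 : ℝ) = (1 + γ) - 2 * Real.sqrt γ := by
    rw [sub_sq, hg]; ring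
  have hB : ((1 + Real.sqrt γ) ^ 2 : ℝ) = (1 + γ) + 2 * Real.sqrt γ := by
    rw [add_sq, hg]; ring
  have hm : 2 * Real.sqrt γ ≤ 1 + γ := by nlinarith [sq_nonneg (1 - Real.sqrt γ)]
  have := core_integral (1 + γ) (2 * Real.sqrt γ) (by positivity) hm
  rw [hA, hB]
  rw [this]
  congr 1
  rw [show (1 + γ) ^ 2 - (2 * Real.sqrt γ) ^ 2 = (1 - γ) ^ 2 by rw [mul_pow]; nlinarith [hg],
    Real.sqrt_sq_eq_abs]

lemma mp_mass_aux (hγ : 0 < γ) : (1 + γ - |1 - γ|) / (2 * γ) = 1 - max 0 (1 - 1 / γ) := by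
  rcases le_or_gt γ 1 with h | h
  · rw [abs_of_nonneg (by linarith), max_eq_left (by rw [sub_nonpos, le_div_iff₀ hγ]; linarith)]
    field_simp
    ring
  · rw [abs_of_neg (by linarith), max_eq_right (by rw [sub_nonneg, div_le_one hγ]; linarith)]
    rw [show (1 + γ - -(1 - γ)) = 2 by ring, show (1:ℝ) - (1 - 1/γ) = 1/γ by ring,
      div_eq_div_iff (by positivity) (by positivity)]
    ring

end aux

section meas
variable {γ : ℝ}

noncomputable def mpD (γ : ℝ) : ℝ → ENNReal :=
  Set.indicator (Set.Icc ((1 - Real.sqrt γ) ^ 2) ((1 + Real.sqrt γ) ^ 2))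
    (fun s => ENNReal.ofReal
      (Real.sqrt (((1 + Real.sqrt γ) ^ 2 - s) * (s - (1 - Real.sqrt γ) ^ 2)) /
        (2 * Real.pi * γ * s)))

lemma MP_eq (γ : ℝ) : MP γ = ENNReal.ofReal (max 0 (1 - 1 / γ)) • Measure.dirac 0 +
    volume.withDensity (mpD γ) := rfl

lemma mpD_measurable : Measurable (mpD γ) := by
  apply Measurable.indicator _ measurableSet_Icc
  apply ENNReal.measurable_ofReal.comp
  apply Measurable.div
  · exact (Real.continuous_sqrt.comp ((continuous_const.sub continuous_id).mul
      (continuous_id.sub continuous_const))).measurable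
  · exact (continuous_const.mul continuous_id).measurable

lemma mp_w_nonneg : (0:ℝ) ≤ max 0 (1 - 1 / γ) := le_max_left _ _

lemma mp_w_le_one (hγ : 0 < γ) : max 0 (1 - 1 / γ) ≤ 1 := by
  apply max_le (by norm_num)
  have : 0 < 1 / γ := by positivity
  linarith

lemma mpD_lintegral (hγ : 0 < γ) :
    ∫⁻ s, mpD γ s = ENNReal.ofReal (1 - max 0 (1 - 1 / γ)) := by
  set A := ((1 - Real.sqrt γ) ^ 2 : ℝ) with hA
  set B := ((1 + Real.sqrt γ) ^ 2 : ℝ) with hB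
  have hg : Real.sqrt γ ^ 2 = γ := Real.sq_sqrt hγ.le
  have hgpos : 0 < Real.sqrt γ := Real.sqrt_pos.2 hγ
  have hA0 : 0 ≤ A := sq_nonneg _
  have hAB : A ≤ B := by
    simp only [hA, hB]; nlinarith [hgpos]
  set ρ : ℝ → ℝ := fun s => Real.sqrt ((B - s) * (s - A)) / (2 * Real.pi * γ * s) with hρ
  have hint : IntegrableOn ρ (Icc A B) volume := by
    have hAm : A = (1 + γ) - 2 * Real.sqrt γ := by rw [hA, sub_sq, hg]; ring
    have hBm : B = (1 + γ) + 2 * Real.sqrt γ := by rw [hB, add_sq, hg]; ring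
    have h1 : IntervalIntegrable (fun s => Real.sqrt ((B - s) * (s - A)) / s) volume A B := by
      rw [hAm, hBm]
      exact core_integrable (1 + γ) (2 * Real.sqrt γ) (by positivity)
        (by nlinarith [sq_nonneg (1 - Real.sqrt γ)])
    have h2 : IntervalIntegrable ρ volume A B := by
      have : ρ = fun s => (2 * Real.pi * γ)⁻¹ * (Real.sqrt ((B - s) * (s - A)) / s) := by
        funext s; rw [hρ]; simp only; rw [eq_comm, inv_mul_eq_div, div_div, mul_comm s (2 * Real.pi * γ)]
      rw [this]
      exact h1.const_mul _
    exact ((intervalIntegrable_iff_integrableOn_Ioc_of_le hAB).mp h2).congr_set_ae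
      Ioc_ae_eq_Icc.symm
  have hnn : 0 ≤ᵐ[volume.restrict (Icc A B)] ρ := by
    filter_upwards [ae_restrict_mem measurableSet_Icc] with s hs
    exact div_nonneg (Real.sqrt_nonneg _) (mul_nonneg (by positivity) (le_trans hA0 hs.1))
  have hval : ∫ s in Icc A B, ρ s = 1 - max 0 (1 - 1 / γ) := by
    rw [integral_Icc_eq_integral_Ioc, ← intervalIntegral.integral_of_le hAB]
    have : ∀ s, ρ s = (2 * Real.pi * γ)⁻¹ * (Real.sqrt ((B - s) * (s - A)) / s) := by
      intro s; rw [hρ]; simp only; rw [eq_comm, inv_mul_eq_div, div_div, mul_comm s (2 * Real.pi * γ)]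
    simp_rw [this]
    rw [intervalIntegral.integral_const_mul, mp_integral hγ, ← mp_mass_aux hγ]
    have hπ : Real.pi ≠ 0 := Real.pi_ne_zero
    field_simp
  rw [show ∫⁻ s, mpD γ s = ∫⁻ s in Icc A B, ENNReal.ofReal (ρ s) ∂volume from by
    rw [← lintegral_indicator measurableSet_Icc]; rfl]
  rw [← ofReal_integral_eq_lintegral_ofReal hint hnn, hval]

lemma mpAC_univ (hγ : 0 < γ) :
    volume.withDensity (mpD γ) univ = ENNReal.ofReal (1 - max 0 (1 - 1 / γ)) := by
  rw [withDensity_apply _ MeasurableSet.univ, Measure.restrict_univ, mpD_lintegral hγ]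

lemma mpAC_Iic (hγ : 0 < γ) : volume.withDensity (mpD γ) (Iic 0) = 0 := by
  rw [withDensity_apply _ measurableSet_Iic,
    ← Measure.restrict_congr_set Iio_ae_eq_Iic]
  have h : (fun s => mpD γ s) =ᵐ[volume.restrict (Iio 0)] (fun _ => 0) := by
    filter_upwards [ae_restrict_mem measurableSet_Iio] with s hs
    have hA0 : (0:ℝ) ≤ (1 - Real.sqrt γ) ^ 2 := sq_nonneg _
    apply indicator_of_notMem
    intro hmem; exact absurd (le_trans hA0 hmem.1) (not_le.2 hs)
  rw [lintegral_congr_ae h, lintegral_zero]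

lemma mpAC_Ioi (hγ : 0 < γ) :
    volume.withDensity (mpD γ) (Ioi 0) = ENNReal.ofReal (1 - max 0 (1 - 1 / γ)) := by
  have h := measure_union (Iic_disjoint_Ioi (le_refl (0:ℝ))) measurableSet_Ioi
    (μ := volume.withDensity (mpD γ))
  rw [Iic_union_Ioi, mpAC_Iic hγ, zero_add, mpAC_univ hγ] at h
  exact h.symm

lemma MP_prob (hγ : 0 < γ) : IsProbabilityMeasure (MP γ) := by
  constructor
  rw [MP_eq, Measure.add_apply, Measure.smul_apply, measure_univ, smul_eq_mul, mul_one,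
    mpAC_univ hγ, ← ENNReal.ofReal_add mp_w_nonneg (by linarith [mp_w_le_one hγ])]
  norm_num

lemma MP_nonneg_ae (hγ : 0 < γ) : ∀ᵐ s ∂(MP γ), 0 ≤ s := by
  rw [ae_iff]
  have : {s : ℝ | ¬ 0 ≤ s} = Iio 0 := by ext s; simp [Set.mem_setOf_eq, not_le]
  rw [this, MP_eq, Measure.add_apply, Measure.smul_apply]
  rw [Measure.dirac_apply' _ measurableSet_Iio]
  have h2 : volume.withDensity (mpD γ) (Iio 0) = 0 :=
    le_antisymm (le_trans (measure_mono Iio_subset_Iic_self) (mpAC_Iic hγ).le) (by simp)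
  rw [indicator_of_notMem (by simp : (0:ℝ) ∉ Iio 0), h2]
  simp

lemma MP_singleton (hγ : 0 < γ) : MP γ {0} = ENNReal.ofReal (max 0 (1 - 1 / γ)) := by
  rw [MP_eq, Measure.add_apply, Measure.smul_apply]
  rw [Measure.dirac_apply' _ (measurableSet_singleton 0)]
  have h2 : volume.withDensity (mpD γ) {0} = 0 :=
    withDensity_absolutelyContinuous volume (mpD γ) (Real.volume_singleton)
  simp [h2]

end meas

theorem stmt19 (γ : ℝ) (hγ : 0 < γ)
    (F : ℝ → ℝ)
    (hF : ∀ lam, F lam = lam ^ 2 * ∫ s, 1 / (s + lam) ^ 2 ∂(MP γ)) :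
    StrictMonoOn F (Set.Ioi 0) ∧
    ContinuousOn F (Set.Ioi 0) ∧
    Tendsto F (nhdsWithin 0 (Set.Ioi 0)) (nhds (max 0 (1 - 1 / γ))) ∧
    Tendsto F atTop (nhds 1) ∧
    ∀ τ : ℝ, max 0 (1 - 1 / γ) < τ → τ < 1 → ∃! lam, 0 < lam ∧ F lam = τ := by
  haveI hprob : IsProbabilityMeasure (MP γ) := MP_prob hγ
  have hae : ∀ᵐ s ∂(MP γ), 0 ≤ s := MP_nonneg_ae hγ
  have hmeas0 : ∀ lam : ℝ, Measurable (fun s : ℝ => lam ^ 2 * (1 / (s + lam) ^ 2)) := by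
    intro lam
    simp only [one_div]
    exact (((measurable_id.add_const lam).pow_const 2).inv).const_mul _
  have hFeq : F = fun lam => ∫ s, lam ^ 2 * (1 / (s + lam) ^ 2) ∂(MP γ) := by
    funext lam
    rw [hF lam, ← integral_const_mul]
  have hint : ∀ lam : ℝ, 0 < lam →
      Integrable (fun s : ℝ => lam ^ 2 * (1 / (s + lam) ^ 2)) (MP γ) := by
    intro lam hlam
    apply Integrable.mono' (integrable_const (1:ℝ)) (hmeas0 lam).aestronglyMeasurable
    filter_upwards [hae] with s hs
    have h0 : (0:ℝ) < (s + lam) ^ 2 := pow_pos (by linarith) 2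
    rw [Real.norm_eq_abs, abs_of_nonneg (by positivity), mul_one_div, div_le_one h0]
    nlinarith
  -- strict monotonicity
  have hMPIoi : 0 < MP γ (Set.Ioi 0) := by
    have h1 : (0:ENNReal) < ENNReal.ofReal (1 - max 0 (1 - 1 / γ)) := by
      rw [ENNReal.ofReal_pos]
      have h2 : max 0 (1 - 1 / γ) < 1 := by
        apply max_lt (by norm_num)
        have : 0 < 1 / γ := by positivity
        linarith
      linarith
    calc (0:ENNReal) < ENNReal.ofReal (1 - max 0 (1 - 1 / γ)) := h1
      _ = volume.withDensity (mpD γ) (Set.Ioi 0) := (mpAC_Ioi hγ).symm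
      _ ≤ MP γ (Set.Ioi 0) := by
          rw [MP_eq]
          exact Measure.le_iff'.1 (Measure.le_add_left le_rfl) _
  have hmono : StrictMonoOn F (Set.Ioi 0) := by
    intro l1 h1 l2 h2 h12
    rw [Set.mem_Ioi] at h1 h2
    have key : 0 < ∫ s, (l2 ^ 2 * (1 / (s + l2) ^ 2) - l1 ^ 2 * (1 / (s + l1) ^ 2)) ∂(MP γ) := by
      rw [integral_pos_iff_support_of_nonneg_ae]
      · apply lt_of_lt_of_le hMPIoi
        apply measure_mono
        intro s hs
        rw [Set.mem_Ioi] at hs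
        have hlt : l1 ^ 2 * (1 / (s + l1) ^ 2) < l2 ^ 2 * (1 / (s + l2) ^ 2) := by
          rw [mul_one_div, mul_one_div,
            div_lt_div_iff₀ (pow_pos (by linarith) 2) (pow_pos (by linarith) 2)]
          have hexp : l2 ^ 2 * (s + l1) ^ 2 - l1 ^ 2 * (s + l2) ^ 2
              = s * (l2 - l1) * (s * (l1 + l2) + 2 * l1 * l2) := by ring
          nlinarith [mul_pos (mul_pos hs (sub_pos.2 h12))
            (by nlinarith : (0:ℝ) < s * (l1 + l2) + 2 * l1 * l2)]
        exact sub_ne_zero.2 (ne_of_gt hlt)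
      · filter_upwards [hae] with s hs
        have hle : l1 ^ 2 * (1 / (s + l1) ^ 2) ≤ l2 ^ 2 * (1 / (s + l2) ^ 2) := by
          rw [mul_one_div, mul_one_div,
            div_le_div_iff₀ (pow_pos (by linarith) 2) (pow_pos (by linarith) 2)]
          nlinarith [mul_nonneg (mul_nonneg hs (sub_pos.2 h12).le)
            (by nlinarith : (0:ℝ) ≤ s * (l1 + l2) + 2 * l1 * l2)]
        simp only [Pi.zero_apply]
        linarith
      · exact (hint l2 h2).sub (hint l1 h1)
    rw [integral_sub (hint l2 h2) (hint l1 h1)] at key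
    have e1 := congrFun hFeq l1
    have e2 := congrFun hFeq l2
    rw [e1, e2]
    linarith
  -- continuity
  have hFcont : ContinuousOn F (Set.Ioi 0) := by
    intro l0 hl0
    rw [Set.mem_Ioi] at hl0
    apply ContinuousAt.continuousWithinAt
    have hI : ContinuousAt (fun lam => ∫ s, 1 / (s + lam) ^ 2 ∂(MP γ)) l0 := by
      apply continuousAt_of_dominated (bound := fun _ => 4 / l0 ^ 2)
      · apply Eventually.of_forall
        intro lam
        apply Measurable.aestronglyMeasurable
        simp only [one_div]
        exact ((measurable_id.add_const lam).pow_const 2).inv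
      · filter_upwards [eventually_gt_nhds (half_lt_self hl0)] with lam hlam
        filter_upwards [hae] with s hs
        rw [Real.norm_eq_abs, abs_of_nonneg (by positivity)]
        have hp : (0:ℝ) < (l0 / 2) ^ 2 := by positivity
        calc 1 / (s + lam) ^ 2 ≤ 1 / (l0 / 2) ^ 2 := by
              apply one_div_le_one_div_of_le hp
              nlinarith
          _ = 4 / l0 ^ 2 := by rw [div_pow, one_div_div]; ring
      · exact integrable_const _
      · filter_upwards [hae] with s hs
        have hne : ((s + l0) ^ 2 : ℝ) ≠ 0 := (pow_pos (by linarith) 2).ne'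
        exact continuousAt_const.div
          (((continuous_const.add continuous_id).continuousAt).pow 2) hne
    have : F = fun lam => lam ^ 2 * ∫ s, 1 / (s + lam) ^ 2 ∂(MP γ) := funext hF
    rw [this]
    exact ((continuous_pow 2).continuousAt).mul hI
  -- limit at infinity
  have hatTop : Tendsto F atTop (nhds 1) := by
    rw [hFeq]
    have h := tendsto_integral_filter_of_dominated_convergence (μ := MP γ)
      (F := fun (lam : ℝ) (s : ℝ) => lam ^ 2 * (1 / (s + lam) ^ 2)) (f := fun _ => (1:ℝ))
      (bound := fun _ => (1:ℝ))
      (Eventually.of_forall fun lam => (hmeas0 lam).aestronglyMeasurable)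
      (by
        filter_upwards [eventually_gt_atTop (0:ℝ)] with lam hlam
        filter_upwards [hae] with s hs
        have h0 : (0:ℝ) < (s + lam) ^ 2 := pow_pos (by linarith) 2
        rw [Real.norm_eq_abs, abs_of_nonneg (by positivity), mul_one_div, div_le_one h0]
        nlinarith)
      (integrable_const _)
      (by
        filter_upwards [hae] with s hs
        have h1 : Tendsto (fun lam : ℝ => s / lam + 1) atTop (nhds 1) := by
          have h2 : Tendsto (fun lam : ℝ => s / lam) atTop (nhds 0) :=
            Tendsto.div_atTop tendsto_const_nhds tendsto_id
          simpa using h2.add tendsto_const_nhds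
        have h2 : Tendsto (fun lam : ℝ => 1 / (s / lam + 1) ^ 2) atTop (nhds 1) := by
          have h3 := (h1.pow 2).inv₀ (by norm_num)
          simpa [one_div] using h3
        apply h2.congr'
        filter_upwards [eventually_gt_atTop (0:ℝ)] with lam hlam
        have hsl : (0:ℝ) < s + lam := by linarith
        field_simp)
    simpa using h
  -- limit at zero
  have hzero : Tendsto F (nhdsWithin 0 (Set.Ioi 0)) (nhds (max 0 (1 - 1 / γ))) := by
    rw [hFeq]
    have h := tendsto_integral_filter_of_dominated_convergence (μ := MP γ)
      (F := fun (lam : ℝ) (s : ℝ) => lam ^ 2 * (1 / (s + lam) ^ 2))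
      (f := Set.indicator {0} (fun _ => (1:ℝ)))
      (bound := fun _ => (1:ℝ)) (l := nhdsWithin 0 (Set.Ioi 0))
      (Eventually.of_forall fun lam => (hmeas0 lam).aestronglyMeasurable)
      (by
        filter_upwards [self_mem_nhdsWithin] with lam hlam
        rw [Set.mem_Ioi] at hlam
        filter_upwards [hae] with s hs
        have h0 : (0:ℝ) < (s + lam) ^ 2 := pow_pos (by linarith) 2
        rw [Real.norm_eq_abs, abs_of_nonneg (by positivity), mul_one_div, div_le_one h0]
        nlinarith)
      (integrable_const _)
      (by
        filter_upwards [hae] with s hs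
        rcases eq_or_lt_of_le hs with h0 | h0
        · rw [← h0, Set.indicator_of_mem (Set.mem_singleton 0)]
          apply Tendsto.congr' _ (tendsto_const_nhds (x := (1:ℝ)))
          filter_upwards [self_mem_nhdsWithin] with lam hlam
          rw [Set.mem_Ioi] at hlam
          rw [zero_add, mul_one_div, div_self (pow_pos hlam 2).ne']
        · have hne : ((s + 0) ^ 2 : ℝ) ≠ 0 := (pow_pos (by linarith) 2).ne'
          have hc : Tendsto (fun lam : ℝ => lam ^ 2 * (1 / (s + lam) ^ 2))
              (nhdsWithin 0 (Set.Ioi 0)) (nhds ((0:ℝ) ^ 2 * (1 / (s + 0) ^ 2))) := by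
            apply Tendsto.mono_left _ nhdsWithin_le_nhds
            apply ContinuousAt.tendsto
            exact ((continuous_pow 2).continuousAt).mul
              (continuousAt_const.div
                (((continuous_const.add continuous_id).continuousAt).pow 2) hne)
          have : s ∉ ({0} : Set ℝ) := by simp [h0.ne']
          rw [Set.indicator_of_notMem this]
          simpa using hc)
    have hval : ∫ s, Set.indicator {0} (fun _ => (1:ℝ)) s ∂(MP γ) = max 0 (1 - 1 / γ) := by
      rw [integral_indicator_const (1:ℝ) (measurableSet_singleton 0), Measure.real, MP_singleton hγ,
        ENNReal.toReal_ofReal mp_w_nonneg, smul_eq_mul, mul_one]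
    rw [← hval]
    exact h
  refine ⟨hmono, hFcont, hzero, hatTop, ?_⟩
  intro τ hτw hτ1
  obtain ⟨l1, hl1τ, hl1pos⟩ := ((hzero.eventually_lt_const hτw).and self_mem_nhdsWithin).exists
  have hl1pos : (0:ℝ) < l1 := hl1pos
  obtain ⟨l2, hl2τ, hl2gt⟩ := ((hatTop.eventually_const_lt hτ1).and (eventually_gt_atTop l1)).exists
  have hIcc : Set.Icc l1 l2 ⊆ Set.Ioi 0 := fun x hx => lt_of_lt_of_le hl1pos hx.1
  obtain ⟨lam, hlam, hFlam⟩ := intermediate_value_Icc hl2gt.le (hFcont.mono hIcc)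
    ⟨hl1τ.le, hl2τ.le⟩
  have hlampos : 0 < lam := lt_of_lt_of_le hl1pos hlam.1
  refine ⟨lam, ⟨hlampos, hFlam⟩, ?_⟩
  rintro y ⟨hy0, hyF⟩
  exact hmono.injOn (Set.mem_Ioi.2 hy0) (Set.mem_Ioi.2 hlampos) (by rw [hyF, hFlam])
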